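/- Let Γ be a Neumaier graph containing an e-regular clique of order s+1 (s, e positive integers), and suppose that every clique of Γ of order e+1 is contained in a clique of order s+1. Then every clique of Γ of order e+1 is contained in a unique clique of order s+1. -/

import Mathlib

open scoped Classical
open Matrix

variable {V : Type*}

/-- `G` is edge-regular with parameters `(v, k, l)`: it has `v` vertices, every vertex has
degree `k`, and every pair of adjacent vertices has exactly `l` common neighbours. -/
def IsEdgeRegular [Fintype V] (G : SimpleGraph V) (v k l : ℕ) : Prop :=
  Fintype.card V = v ∧ G.IsRegularOfDegree k ∧
    ∀ x y : V, G.Adj x y → Fintype.card (G.commonNeighbors x y) = l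

/-- `C` is an `e`-regular clique of `G` (for `e > 0`): a clique such that every vertex
outside `C` is adjacent to exactly `e` vertices of `C`. -/
def IsRegularCliqueWith [Fintype V] (G : SimpleGraph V) (C : Finset V) (e : ℕ) : Prop :=
  G.IsClique ↑C ∧ 0 < e ∧ ∀ x : V, x ∉ C → (C.filter (fun y => G.Adj x y)).card = e

/-- A Neumaier graph: a non-complete edge-regular graph containing a regular clique. -/
def IsNeumaier [Fintype V] (G : SimpleGraph V) : Prop :=
  (∃ v k l : ℕ, IsEdgeRegular G v k l) ∧ G ≠ ⊤ ∧ ∃ (C : Finset V) (e : ℕ), IsRegularCliqueWith G C e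

/-- A graph is complete multipartite when non-adjacency (together with equality) is
a transitive relation on the vertices. -/
def IsCompleteMultipartite (G : SimpleGraph V) : Prop :=
  ∀ x y z : V, ¬G.Adj x y → ¬G.Adj y z → ¬G.Adj x z

/-- `θ` is a (real) eigenvalue of the adjacency matrix of `G`. -/
def IsAdjEigenvalue [Fintype V] (G : SimpleGraph V) (θ : ℝ) : Prop :=
  ∃ f : V → ℝ, f ≠ 0 ∧ G.adjMatrix ℝ *ᵥ f = θ • f

/-- The average, over all edges of `G`, of the number of common neighbours of the
two endpoints of the edge. -/
noncomputable def avgLambda [Fintype V] (G : SimpleGraph V) : ℝ :=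
  (∑ ed ∈ G.edgeFinset, Sym2.lift
      ⟨fun x y => ((G.commonNeighbors x y).ncard : ℝ),
       fun x y => by dsimp only; rw [SimpleGraph.commonNeighbors_symm]⟩ ed) / (G.edgeFinset.card : ℝ)


section Helpers
open Finset
set_option linter.unusedSectionVars false
variable [Fintype V] {G : SimpleGraph V}


lemma clique_filter_adj {D : Finset V} (hD : G.IsClique ↑D) {y : V} (hy : y ∈ D) :
    D.filter (fun x => G.Adj y x) = D.erase y := by
  ext x
  simp only [Finset.mem_filter, Finset.mem_erase]
  constructor
  · rintro ⟨hx, hadj⟩; exact ⟨fun h => G.irrefl (h ▸ hadj), hx⟩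
  · rintro ⟨hne, hx⟩; exact ⟨hx, hD hy hx (Ne.symm hne)⟩

lemma clique_filter_adj2 {D : Finset V} (hD : G.IsClique ↑D) {x y : V} (hx : x ∈ D)
    (hy : y ∈ D) :
    D.filter (fun z => G.Adj x z ∧ G.Adj y z) = (D.erase x).erase y := by
  ext z
  simp only [Finset.mem_filter, Finset.mem_erase]
  constructor
  · rintro ⟨hz, ha, hb⟩
    exact ⟨fun h => G.irrefl (h ▸ hb), fun h => G.irrefl (h ▸ ha), hz⟩
  · rintro ⟨hzy, hzx, hz⟩
    exact ⟨hz, hD hx hz (Ne.symm hzx), hD hy hz (Ne.symm hzy)⟩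

lemma filter_split (D : Finset V) (p : V → Prop) [DecidablePred p] :
    (D.filter p).card + (Dᶜ.filter p).card = (Finset.univ.filter p).card := by
  rw [← Finset.card_union_of_disjoint, ← Finset.filter_union, Finset.union_compl]
  exact Finset.disjoint_filter_filter (disjoint_compl_right)

/-- number of neighbours outside an (s+1)-clique, for a vertex inside it. -/
lemma out_deg {k s : ℕ} (hreg : G.IsRegularOfDegree k) {D : Finset V}
    (hD : G.IsNClique (s + 1) D) {y : V} (hy : y ∈ D) :
    ((Dᶜ.filter (fun z => G.Adj y z)).card : ℤ) = (k : ℤ) - s := by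
  have h1 := filter_split D (fun z => G.Adj y z)
  rw [clique_filter_adj hD.1 hy] at h1
  have h2 : (Finset.univ.filter (fun z => G.Adj y z)).card = k := by
    rw [← SimpleGraph.neighborFinset_eq_filter]; exact hreg y
  have h3 : (D.erase y).card = s := by
    rw [Finset.card_erase_of_mem hy, hD.2]; omega
  omega

lemma out_common {l s : ℕ}
    (hl : ∀ x y : V, G.Adj x y → Fintype.card (G.commonNeighbors x y) = l)
    {D : Finset V} (hD : G.IsNClique (s + 1) D) {x y : V} (hx : x ∈ D) (hy : y ∈ D)
    (hxy : x ≠ y) :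
    ((Dᶜ.filter (fun z => G.Adj x z ∧ G.Adj y z)).card : ℤ) = (l : ℤ) - s + 1 := by
  have h1 := filter_split D (fun z => G.Adj x z ∧ G.Adj y z)
  rw [clique_filter_adj2 hD.1 hx hy] at h1
  have hadj : G.Adj x y := hD.1 hx hy hxy
  have h2 : (Finset.univ.filter (fun z => G.Adj x z ∧ G.Adj y z)).card = l := by
    rw [← hl x y hadj]
    exact (Fintype.card_of_subtype _ (fun z => by simp [SimpleGraph.mem_commonNeighbors])).symm
  have h3 : ((D.erase x).erase y).card = s - 1 := by
    rw [Finset.card_erase_of_mem (Finset.mem_erase.2 ⟨hxy.symm, hy⟩),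
      Finset.card_erase_of_mem hx, hD.2]; omega
  have hs1 : 1 ≤ s := by
    by_contra h
    interval_cases s
    · have : D.card = 1 := hD.2
      rw [Finset.card_eq_one] at this
      obtain ⟨a, ha⟩ := this
      subst ha
      simp at hx hy
      exact hxy (hx.trans hy.symm)
  omega

lemma sumA {k s : ℕ} (hreg : G.IsRegularOfDegree k) {D : Finset V}
    (hD : G.IsNClique (s + 1) D) :
    ∑ z ∈ Dᶜ, ((D.filter (fun y => G.Adj z y)).card : ℤ) = (s + 1) * ((k : ℤ) - s) := by
  have : ∀ z, ((D.filter (fun y => G.Adj z y)).card : ℤ)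
      = ∑ y ∈ D, (if G.Adj z y then (1 : ℤ) else 0) := by
    intro z; rw [Finset.card_filter]; push_cast; rfl
  simp_rw [this]
  rw [Finset.sum_comm]
  have : ∀ y ∈ D, ∑ z ∈ Dᶜ, (if G.Adj z y then (1 : ℤ) else 0) = (k : ℤ) - s := by
    intro y hy
    rw [← out_deg hreg hD hy, Finset.card_filter]
    push_cast
    refine Finset.sum_congr rfl fun z _ => ?_
    simp [G.adj_comm]
  rw [Finset.sum_congr rfl this, Finset.sum_const, hD.2]
  push_cast; ring

lemma card_sq_sum (D : Finset V) (z : V) :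
    ((D.filter (fun y => G.Adj z y)).card : ℤ) ^ 2
      = ∑ x ∈ D, ∑ y ∈ D, (if G.Adj x z ∧ G.Adj y z then (1 : ℤ) else 0) := by
  rw [sq, Finset.card_filter]
  push_cast
  rw [Finset.sum_mul_sum]
  refine Finset.sum_congr rfl fun x hx => Finset.sum_congr rfl fun y hy => ?_
  by_cases h1 : G.Adj z x <;> by_cases h2 : G.Adj z y <;>
    simp [h1, h2, G.adj_comm x z, G.adj_comm y z]

lemma sumB {k l s : ℕ} (hreg : G.IsRegularOfDegree k)
    (hl : ∀ x y : V, G.Adj x y → Fintype.card (G.commonNeighbors x y) = l)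
    {D : Finset V} (hD : G.IsNClique (s + 1) D) :
    ∑ z ∈ Dᶜ, ((D.filter (fun y => G.Adj z y)).card : ℤ) ^ 2
      = (s + 1) * (((k : ℤ) - s) + s * ((l : ℤ) - s + 1)) := by
  simp_rw [card_sq_sum]
  rw [Finset.sum_comm]
  have hswap : ∀ x ∈ D, ∑ z ∈ Dᶜ, ∑ y ∈ D, (if G.Adj x z ∧ G.Adj y z then (1 : ℤ) else 0)
      = ∑ y ∈ D, ∑ z ∈ Dᶜ, (if G.Adj x z ∧ G.Adj y z then (1 : ℤ) else 0) :=
    fun x _ => Finset.sum_comm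
  rw [Finset.sum_congr rfl hswap]
  have hinner : ∀ x ∈ D, ∀ y ∈ D,
      ∑ z ∈ Dᶜ, (if G.Adj x z ∧ G.Adj y z then (1 : ℤ) else 0)
        = ((Dᶜ.filter (fun z => G.Adj x z ∧ G.Adj y z)).card : ℤ) := by
    intro x _ y _
    rw [Finset.card_filter]; push_cast; rfl
  have step : ∀ x ∈ D,
      ∑ y ∈ D, ∑ z ∈ Dᶜ, (if G.Adj x z ∧ G.Adj y z then (1 : ℤ) else 0)
        = ((k : ℤ) - s) + s * ((l : ℤ) - s + 1) := by
    intro x hx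
    rw [Finset.sum_congr rfl (hinner x hx)]
    rw [← Finset.sum_erase_add _ _ hx]
    have hdiag : ((Dᶜ.filter (fun z => G.Adj x z ∧ G.Adj x z)).card : ℤ) = (k : ℤ) - s := by
      have hfe : Dᶜ.filter (fun z => G.Adj x z ∧ G.Adj x z) = Dᶜ.filter (fun z => G.Adj x z) :=
        Finset.filter_congr (fun z _ => by simp)
      rw [hfe]
      exact out_deg hreg hD hx
    have hoff : ∀ y ∈ D.erase x,
        ((Dᶜ.filter (fun z => G.Adj x z ∧ G.Adj y z)).card : ℤ) = (l : ℤ) - s + 1 := by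
      intro y hy
      exact out_common hl hD hx (Finset.mem_of_mem_erase hy)
        (Ne.symm (Finset.ne_of_mem_erase hy))
    rw [Finset.sum_congr rfl hoff, hdiag, Finset.sum_const, Finset.card_erase_of_mem hx,
      hD.2]
    simp only [Nat.add_sub_cancel, nsmul_eq_mul]
    push_cast
    ring
  rw [Finset.sum_congr rfl step, Finset.sum_const, hD.2]
  push_cast
  ring

/-- Every `(s+1)`-clique of an edge-regular graph containing an `e`-regular
`(s+1)`-clique is itself `e`-regular. -/
lemma clique_regular {k l s e : ℕ} (hreg : G.IsRegularOfDegree k)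
    (hl : ∀ x y : V, G.Adj x y → Fintype.card (G.commonNeighbors x y) = l)
    {C : Finset V} (hCcl : G.IsClique ↑C)
    (hCreg : ∀ x : V, x ∉ C → (C.filter (fun y => G.Adj x y)).card = e)
    (hCcard : C.card = s + 1)
    {D : Finset V} (hD : G.IsNClique (s + 1) D) :
    ∀ x : V, x ∉ D → (D.filter (fun y => G.Adj x y)).card = e := by
  have key : ∀ (E : Finset V), G.IsNClique (s + 1) E →
      ∑ z ∈ Eᶜ, (((E.filter (fun y => G.Adj z y)).card : ℤ) - e) ^ 2
        = (s + 1) * (((k : ℤ) - s) + s * ((l : ℤ) - s + 1))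
          - 2 * e * ((s + 1) * ((k : ℤ) - s))
          + e ^ 2 * ((Fintype.card V : ℤ) - (s + 1)) := by
    intro E hE
    have hcardc : ((Eᶜ.card : ℤ)) = (Fintype.card V : ℤ) - (s + 1) := by
      have hle : E.card ≤ Fintype.card V := Finset.card_le_univ E
      rw [hE.2] at hle
      rw [Finset.card_compl, hE.2, Nat.cast_sub hle]
      push_cast
      ring
    have expand : ∀ z ∈ Eᶜ, (((E.filter (fun y => G.Adj z y)).card : ℤ) - e) ^ 2
        = ((E.filter (fun y => G.Adj z y)).card : ℤ) ^ 2
          - 2 * e * ((E.filter (fun y => G.Adj z y)).card : ℤ) + e ^ 2 := by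
      intro z _; ring
    rw [Finset.sum_congr rfl expand, Finset.sum_add_distrib, Finset.sum_sub_distrib,
      ← Finset.mul_sum, Finset.sum_const, sumA hreg hE, sumB hreg hl hE, nsmul_eq_mul,
      hcardc]
    ring
  have hCclique : G.IsNClique (s + 1) C := ⟨hCcl, hCcard⟩
  have hCzero : ∑ z ∈ Cᶜ, (((C.filter (fun y => G.Adj z y)).card : ℤ) - e) ^ 2 = 0 := by
    refine Finset.sum_eq_zero fun z hz => ?_
    rw [hCreg z (Finset.mem_compl.1 hz)]
    ring
  have hDzero : ∑ z ∈ Dᶜ, (((D.filter (fun y => G.Adj z y)).card : ℤ) - e) ^ 2 = 0 := by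
    rw [key D hD, ← key C hCclique, hCzero]
  intro x hx
  have hnn : ∀ z ∈ Dᶜ, (0 : ℤ) ≤ (((D.filter (fun y => G.Adj z y)).card : ℤ) - e) ^ 2 :=
    fun z _ => sq_nonneg _
  have := (Finset.sum_eq_zero_iff_of_nonneg hnn).1 hDzero x (Finset.mem_compl.2 hx)
  have h2 : ((D.filter (fun y => G.Adj x y)).card : ℤ) = e := by
    have := sq_eq_zero_iff.1 this
    linarith
  exact_mod_cast h2

end Helpers

/-- In a Neumaier graph with an `e`-regular clique of order `s + 1`, if every
clique of order `e + 1` is contained in a clique of order `s + 1`, then every clique of order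
`e + 1` is contained in a *unique* clique of order `s + 1`. -/
theorem stmt3 [Fintype V] (G : SimpleGraph V) (v k l s e : ℕ)
    (hER : IsEdgeRegular G v k l) (hnc : G ≠ ⊤) (hs : 0 < s) (he : 0 < e)
    (C : Finset V) (hC : IsRegularCliqueWith G C e) (hCcard : C.card = s + 1)
    (hext : ∀ H : Finset V, G.IsNClique (e + 1) H → ∃ D : Finset V, G.IsNClique (s + 1) D ∧ H ⊆ D) :
    ∀ H : Finset V, G.IsNClique (e + 1) H →
      ∃! D : Finset V, G.IsNClique (s + 1) D ∧ H ⊆ D := by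
  intro H hH
  obtain ⟨D, hD, hHD⟩ := hext H hH
  refine ⟨D, ⟨hD, hHD⟩, ?_⟩
  rintro D' ⟨hD', hHD'⟩
  have hreg := hER.2.1
  have hl := hER.2.2
  have hDreg := clique_regular hreg hl hC.1 hC.2.2 hCcard hD
  have hsub : D' ⊆ D := by
    intro x hx
    by_contra hxD
    have hxH : x ∉ H := fun h => hxD (hHD h)
    have hHsub : H ⊆ D.filter (fun y => G.Adj x y) := by
      intro h hh
      refine Finset.mem_filter.2 ⟨hHD hh, ?_⟩
      exact hD'.1 hx (hHD' hh) (fun hexx => hxH (hexx ▸ hh))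
    have hcard := Finset.card_le_card hHsub
    rw [hH.2, hDreg x hxD] at hcard
    omega
  exact Finset.eq_of_subset_of_card_le hsub (le_of_eq (hD.2.trans hD'.2.symm))
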